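/- There is a universal constant C > 0 such that for every edge-weighted hypergraph H = (V,E,w) with |V| ≥ 2 and γ₂ > 0, the hop-diameter satisfies diam(H) ≤ C · (ln N_w)/γ₂, where N_w := max_{u ∈ V} w(V)/w_u. -/

import Mathlib

open Finset

/-- An edge-weighted hypergraph on a finite vertex set `V`: a finite set of hyperedges,
each a nonempty subset of `V`, with positive weights. -/
structure EdgeWeightedHypergraph (V : Type*) [Fintype V] [DecidableEq V] where
  E : Finset (Finset V)
  w : Finset V → ℝ
  edge_nonempty : ∀ e ∈ E, e.Nonempty
  w_pos : ∀ e ∈ E, 0 < w e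

namespace EdgeWeightedHypergraph

variable {V : Type*} [Fintype V] [DecidableEq V]

/-- The weight of a vertex: total weight of hyperedges containing it. -/
noncomputable def wv (H : EdgeWeightedHypergraph V) (v : V) : ℝ :=
  ∑ e ∈ H.E.filter (fun e => v ∈ e), H.w e

/-- The weight of a set of vertices. -/
noncomputable def wS (H : EdgeWeightedHypergraph V) (S : Finset V) : ℝ := ∑ v ∈ S, H.wv v

/-- The boundary of `S`: hyperedges meeting both `S` and its complement. -/
noncomputable def bdry (H : EdgeWeightedHypergraph V) (S : Finset V) : Finset (Finset V) :=
  H.E.filter (fun e => (e ∩ S).Nonempty ∧ (e \ S).Nonempty)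

/-- The expansion `φ(S)` of a set of vertices. -/
noncomputable def phi (H : EdgeWeightedHypergraph V) (S : Finset V) : ℝ :=
  (∑ e ∈ H.bdry S, H.w e) / H.wS S

/-- `max_{u,v ∈ e} (f u - f v)^2`. -/
noncomputable def edgeDisc (H : EdgeWeightedHypergraph V) (f : V → ℝ) (e : Finset V) : ℝ :=
  sSup {x : ℝ | ∃ u ∈ e, ∃ v ∈ e, (f u - f v) ^ 2 = x}

/-- The discrepancy ratio `D_w(f)`. -/
noncomputable def disc (H : EdgeWeightedHypergraph V) (f : V → ℝ) : ℝ :=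
  (∑ e ∈ H.E, H.w e * H.edgeDisc f e) / ∑ u : V, H.wv u * f u ^ 2

/-- The weighted inner product `⟨f,g⟩_w`. -/
noncomputable def wip (H : EdgeWeightedHypergraph V) (f g : V → ℝ) : ℝ :=
  ∑ u : V, H.wv u * f u * g u

/-- `γ₂`: infimum of the discrepancy ratio over nonzero `f ⊥_w 1`. -/
noncomputable def gamma2 (H : EdgeWeightedHypergraph V) : ℝ :=
  sInf {x : ℝ | ∃ f : V → ℝ, f ≠ 0 ∧ H.wip f (fun _ => 1) = 0 ∧ H.disc f = x}

/-- The hypergraph expansion `φ_H`. -/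
noncomputable def phiH (H : EdgeWeightedHypergraph V) : ℝ :=
  sInf {x : ℝ | ∃ S : Finset V, S.Nonempty ∧ S ≠ univ ∧
    x = max (H.phi S) (H.phi Sᶜ)}

/-- `ζ_k`: inf over `k`-tuples of nonzero pairwise `w`-orthogonal vectors of the
sup of the discrepancy ratio over nonzero vectors in their span. -/
noncomputable def zeta (H : EdgeWeightedHypergraph V) (k : ℕ) : ℝ :=
  sInf {x : ℝ | ∃ f : Fin k → V → ℝ, (∀ i, f i ≠ 0) ∧
    (∀ i j, i ≠ j → H.wip (f i) (f j) = 0) ∧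
    x = sSup {y : ℝ | ∃ h : V → ℝ, h ≠ 0 ∧
      h ∈ Submodule.span ℝ (Set.range f) ∧ H.disc h = y}}

/-- `ξ_k`: inf over `k`-tuples of nonzero pairwise `w`-orthogonal vectors of the
maximum discrepancy ratio among them. -/
noncomputable def xi (H : EdgeWeightedHypergraph V) (k : ℕ) : ℝ :=
  sInf {x : ℝ | ∃ f : Fin k → V → ℝ, (∀ i, f i ≠ 0) ∧
    (∀ i j, i ≠ j → H.wip (f i) (f j) = 0) ∧
    x = sSup {y : ℝ | ∃ i, H.disc (f i) = y}}

/-- A sequence of procedural minimizers: `f 0` is a nonzero constant vector, each `f i`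
is nonzero and `w`-orthogonal to the previous ones, and attains the infimum of the
discrepancy ratio over nonzero vectors `w`-orthogonal to the previous ones. -/
def IsProcMin (H : EdgeWeightedHypergraph V) {k : ℕ} (f : Fin k → V → ℝ) : Prop :=
  (∀ i, f i ≠ 0) ∧
  (∀ i : Fin k, (i : ℕ) = 0 → ∃ c : ℝ, f i = fun _ => c) ∧
  (∀ i j : Fin k, (j : ℕ) < (i : ℕ) → H.wip (f i) (f j) = 0) ∧
  (∀ i : Fin k, 0 < (i : ℕ) → H.disc (f i) =
    sInf {x : ℝ | ∃ g : V → ℝ, g ≠ 0 ∧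
      (∀ j : Fin k, (j : ℕ) < (i : ℕ) → H.wip g (f j) = 0) ∧ H.disc g = x})

end EdgeWeightedHypergraph

namespace EdgeWeightedHypergraph

variable {V : Type*} [Fintype V] [DecidableEq V]

/-- `connectsIn H u v l`: there is a path of `l` hyperedges of `H`, consecutive ones
intersecting, whose first edge contains `u` and last edge contains `v`. -/
def connectsIn (H : EdgeWeightedHypergraph V) (u v : V) (l : ℕ) : Prop :=
  ∃ p : List (Finset V), p.length = l ∧ (∀ e ∈ p, e ∈ H.E) ∧
    p.Chain' (fun a b => (a ∩ b).Nonempty) ∧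
    ∃ hp : p ≠ [], u ∈ p.head hp ∧ v ∈ p.getLast hp

/-- The hop-diameter: the least `l` such that every pair of vertices is connected
by a path of length at most `l`. -/
noncomputable def hopDiam (H : EdgeWeightedHypergraph V) : ℕ :=
  sInf {l : ℕ | ∀ u v : V, ∃ l' ≤ l, H.connectsIn u v l'}

end EdgeWeightedHypergraph

namespace EdgeWeightedHypergraph

variable {V : Type*} [Fintype V] [DecidableEq V] (H : EdgeWeightedHypergraph V)

variable (H : EdgeWeightedHypergraph V)

lemma wv_nonneg (v : V) : 0 ≤ H.wv v := by
  apply Finset.sum_nonneg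
  intro e he
  exact le_of_lt (H.w_pos e (mem_filter.mp he).1)

lemma wS_nonneg (S : Finset V) : 0 ≤ H.wS S :=
  Finset.sum_nonneg fun v _ => H.wv_nonneg v

lemma wS_mono {S T : Finset V} (h : S ⊆ T) : H.wS S ≤ H.wS T :=
  Finset.sum_le_sum_of_subset_of_nonneg h (fun v _ _ => H.wv_nonneg v)

lemma exists_edge {v : V} (hv : 0 < H.wv v) : ∃ e ∈ H.E, v ∈ e := by
  by_contra h
  push_neg at h
  have : H.E.filter (fun e => v ∈ e) = ∅ := by
    apply Finset.filter_eq_empty_iff.mpr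
    intro e he
    exact h e he
  rw [wv, this, Finset.sum_empty] at hv
  exact lt_irrefl _ hv

/-- double counting: if every edge of `F ⊆ E` meets `T`, then total weight of `F` is at
most `wS T`. -/
lemma sum_le_wS (F : Finset (Finset V)) (hF : F ⊆ H.E) (T : Finset V)
    (hT : ∀ e ∈ F, (e ∩ T).Nonempty) : ∑ e ∈ F, H.w e ≤ H.wS T := by
  have key : ∑ e ∈ F, H.w e ≤ ∑ e ∈ F, ∑ v ∈ T, (if v ∈ e then H.w e else 0) := by
    apply Finset.sum_le_sum
    intro e he
    obtain ⟨v, hv⟩ := hT e he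
    rw [Finset.mem_inter] at hv
    have hwe : 0 < H.w e := H.w_pos e (hF he)
    calc H.w e = (if v ∈ e then H.w e else 0) := by simp [hv.1]
      _ ≤ ∑ v ∈ T, (if v ∈ e then H.w e else 0) := by
          apply Finset.single_le_sum (f := fun v => if v ∈ e then H.w e else 0)
          · intro i _; positivity
          · exact hv.2
  rw [Finset.sum_comm] at key
  refine key.trans (Finset.sum_le_sum fun v _ => ?_)
  rw [← Finset.sum_filter]
  apply Finset.sum_le_sum_of_subset_of_nonneg
  · intro e he
    rw [Finset.mem_filter] at he ⊢
    exact ⟨hF he.1, he.2⟩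
  · intro e he _; exact le_of_lt (H.w_pos e (mem_filter.mp he).1)

lemma edgeDisc_set_eq (f : V → ℝ) (e : Finset V) :
    {x : ℝ | ∃ u ∈ e, ∃ v ∈ e, (f u - f v) ^ 2 = x} =
      ↑((e ×ˢ e).image (fun p => (f p.1 - f p.2) ^ 2)) := by
  ext x
  simp only [Set.mem_setOf_eq, Finset.coe_image, Set.mem_image, Finset.mem_coe,
    Finset.mem_product]
  constructor
  · rintro ⟨u, hu, v, hv, h⟩; exact ⟨(u, v), ⟨hu, hv⟩, h⟩
  · rintro ⟨⟨u, v⟩, ⟨hu, hv⟩, h⟩; exact ⟨u, hu, v, hv, h⟩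

lemma edgeDisc_bddAbove (f : V → ℝ) (e : Finset V) :
    BddAbove {x : ℝ | ∃ u ∈ e, ∃ v ∈ e, (f u - f v) ^ 2 = x} := by
  rw [edgeDisc_set_eq]
  exact Finset.bddAbove _

lemma edgeDisc_nonneg (f : V → ℝ) {e : Finset V} (he : e.Nonempty) :
    0 ≤ H.edgeDisc f e := by
  obtain ⟨u, hu⟩ := he
  have h0 : (0:ℝ) ∈ {x : ℝ | ∃ u ∈ e, ∃ v ∈ e, (f u - f v) ^ 2 = x} :=
    ⟨u, hu, u, hu, by ring⟩
  exact le_csSup (edgeDisc_bddAbove f e) h0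

lemma denom_pos (hwv : ∀ v : V, 0 < H.wv v) {f : V → ℝ} (hf : f ≠ 0) :
    0 < ∑ u : V, H.wv u * f u ^ 2 := by
  have : ∃ u : V, f u ≠ 0 := by
    by_contra h; push_neg at h; exact hf (funext fun u => h u)
  obtain ⟨u, hu⟩ := this
  apply Finset.sum_pos'
  · intro i _; exact mul_nonneg (H.wv_nonneg i) (sq_nonneg _)
  · exact ⟨u, Finset.mem_univ u, mul_pos (hwv u) (by positivity)⟩

lemma disc_nonneg (hwv : ∀ v : V, 0 < H.wv v) (f : V → ℝ) : 0 ≤ H.disc f := by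
  apply div_nonneg
  · apply Finset.sum_nonneg
    intro e he
    exact mul_nonneg (le_of_lt (H.w_pos e he)) (H.edgeDisc_nonneg f (H.edge_nonempty e he))
  · apply Finset.sum_nonneg; intro u _; exact mul_nonneg (H.wv_nonneg u) (sq_nonneg _)

lemma gamma2_bddBelow (hwv : ∀ v : V, 0 < H.wv v) :
    BddBelow {x : ℝ | ∃ f : V → ℝ, f ≠ 0 ∧ H.wip f (fun _ => 1) = 0 ∧ H.disc f = x} := by
  refine ⟨0, ?_⟩
  rintro x ⟨f, _, _, rfl⟩
  exact H.disc_nonneg hwv f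


/-- the centered indicator test function of a set `S`. -/
noncomputable def indf (S : Finset V) : V → ℝ :=
  fun v => (if v ∈ S then (1:ℝ) else 0) - H.wS S / H.wS univ

lemma wS_univ_pos (hwv : ∀ v : V, 0 < H.wv v) [Nonempty V] : 0 < H.wS univ :=
  Finset.sum_pos (fun v _ => hwv v) univ_nonempty

lemma wS_pos (hwv : ∀ v : V, 0 < H.wv v) {S : Finset V} (hS : S.Nonempty) :
    0 < H.wS S := Finset.sum_pos (fun v _ => hwv v) hS

lemma wS_compl (S : Finset V) : H.wS Sᶜ = H.wS univ - H.wS S := by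
  have := Finset.sum_add_sum_compl S (fun v => H.wv v)
  unfold wS; linarith

lemma indf_wip (S : Finset V) (hW : H.wS univ ≠ 0) :
    H.wip (H.indf S) (fun _ => 1) = 0 := by
  unfold wip indf
  have : ∀ u : V, H.wv u * ((if u ∈ S then (1:ℝ) else 0) - H.wS S / H.wS univ) * 1
      = (if u ∈ S then H.wv u else 0) - H.wv u * (H.wS S / H.wS univ) := by
    intro u; by_cases h : u ∈ S <;> simp [h] <;> ring
  simp only [this, Finset.sum_sub_distrib, ← Finset.sum_filter, Finset.filter_mem_eq_inter,
    Finset.univ_inter, ← Finset.sum_mul]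
  show H.wS S - H.wS univ * (H.wS S / H.wS univ) = 0
  field_simp
  ring

lemma indf_ne_zero {S : Finset V} (hS : S.Nonempty) (hSu : S ≠ univ)
    (hwv : ∀ v : V, 0 < H.wv v) : H.indf S ≠ 0 := by
  have : Nonempty V := ⟨hS.choose⟩
  have hW : 0 < H.wS univ := H.wS_univ_pos hwv
  obtain ⟨u, hu⟩ := hS
  have hSc : Sᶜ.Nonempty := by
    rw [← Finset.card_pos, Finset.card_compl]
    have : S.card < Fintype.card V := (Finset.card_lt_card (ssubset_univ_iff.mpr hSu)).trans_le
      (by simp)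
    omega
  obtain ⟨v, hv⟩ := hSc
  rw [Finset.mem_compl] at hv
  intro h
  have h1 : H.indf S u = 0 := by rw [h]; rfl
  have h2 : H.indf S v = 0 := by rw [h]; rfl
  unfold indf at h1 h2
  rw [if_pos hu] at h1
  rw [if_neg hv] at h2
  linarith

lemma indf_denom (S : Finset V) [Nonempty V] (hwv : ∀ v : V, 0 < H.wv v) :
    ∑ u : V, H.wv u * (H.indf S u) ^ 2
      = H.wS S * (1 - H.wS S / H.wS univ) := by
  have hW : 0 < H.wS univ := H.wS_univ_pos hwv
  set α := H.wS S / H.wS univ with hα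
  have split : ∑ u : V, H.wv u * (H.indf S u) ^ 2
      = ∑ u ∈ S, H.wv u * (1 - α)^2 + ∑ u ∈ Sᶜ, H.wv u * α^2 := by
    rw [← Finset.sum_add_sum_compl S]
    congr 1
    · apply Finset.sum_congr rfl; intro u hu; unfold indf; rw [if_pos hu]
    · apply Finset.sum_congr rfl; intro u hu; rw [Finset.mem_compl] at hu
      unfold indf; rw [if_neg hu]; ring
  rw [split, ← Finset.sum_mul, ← Finset.sum_mul]
  show H.wS S * (1-α)^2 + H.wS Sᶜ * α^2 = H.wS S * (1 - α)
  rw [H.wS_compl, hα]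
  field_simp
  ring

lemma indf_edgeDisc {S : Finset V} {e : Finset V} (he : e ∈ H.E) :
    H.edgeDisc (H.indf S) e = if e ∈ H.bdry S then 1 else 0 := by
  set α := H.wS S / H.wS univ with hα
  have hval : ∀ u, H.indf S u = (if u ∈ S then (1:ℝ) else 0) - α := fun u => rfl
  by_cases hb : e ∈ H.bdry S
  · rw [if_pos hb]
    rw [bdry, Finset.mem_filter] at hb
    obtain ⟨-, ⟨x, hx⟩, ⟨y, hy⟩⟩ := hb
    rw [Finset.mem_inter] at hx
    rw [Finset.mem_sdiff] at hy
    have key : ∀ a b : ℝ, (a = 0 ∨ a = 1) → (b = 0 ∨ b = 1) → (a - b)^2 ≤ 1 := by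
      rintro a b (rfl | rfl) (rfl | rfl) <;> norm_num
    have hmem : (1:ℝ) ∈ {z : ℝ | ∃ u ∈ e, ∃ v ∈ e, (H.indf S u - H.indf S v) ^ 2 = z} := by
      refine ⟨x, hx.1, y, hy.1, ?_⟩
      rw [hval x, hval y, if_pos hx.2, if_neg hy.2]; ring
    apply le_antisymm
    · apply csSup_le ⟨1, hmem⟩
      rintro z ⟨u, hu, v, hv, rfl⟩
      rw [hval u, hval v]
      have heq : ((if u ∈ S then (1:ℝ) else 0) - α - ((if v ∈ S then (1:ℝ) else 0) - α))
          = ((if u ∈ S then (1:ℝ) else 0) - ((if v ∈ S then (1:ℝ) else 0))) := by ring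
      rw [heq]
      exact key _ _ (by by_cases h : u ∈ S <;> simp [h]) (by by_cases h : v ∈ S <;> simp [h])
    · exact le_csSup (edgeDisc_bddAbove _ e) hmem
  · rw [if_neg hb]
    rw [bdry, Finset.mem_filter] at hb
    push_neg at hb
    have hcases := hb he
    -- indf is constant on e
    have hconst : ∀ u ∈ e, ∀ v ∈ e, H.indf S u = H.indf S v := by
      intro u hu v hv
      rw [hval u, hval v]
      rcases Finset.eq_empty_or_nonempty (e ∩ S) with h | h
      · have h1 : u ∉ S := fun hs => (Finset.eq_empty_iff_forall_notMem.mp h u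
          (Finset.mem_inter.mpr ⟨hu, hs⟩))
        have h2 : v ∉ S := fun hs => (Finset.eq_empty_iff_forall_notMem.mp h v
          (Finset.mem_inter.mpr ⟨hv, hs⟩))
        simp [h1, h2]
      · have hd := hcases h
        have h1 : u ∈ S := by
          by_contra h1
          exact (Finset.not_nonempty_iff_eq_empty.mpr
            hd) ⟨u, Finset.mem_sdiff.mpr ⟨hu, h1⟩⟩
        have h2 : v ∈ S := by
          by_contra h2
          exact (Finset.not_nonempty_iff_eq_empty.mpr
            hd) ⟨v, Finset.mem_sdiff.mpr ⟨hv, h2⟩⟩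
        simp [h1, h2]
    obtain ⟨u0, hu0⟩ := H.edge_nonempty e he
    have hset : {x : ℝ | ∃ u ∈ e, ∃ v ∈ e, (H.indf S u - H.indf S v) ^ 2 = x} = {0} := by
      ext z
      simp only [Set.mem_setOf_eq, Set.mem_singleton_iff]
      constructor
      · rintro ⟨u, hu, v, hv, rfl⟩
        rw [hconst u hu v hv]; ring
      · rintro rfl; exact ⟨u0, hu0, u0, hu0, by ring⟩
    unfold edgeDisc
    rw [hset, csSup_singleton]
lemma indf_disc {S : Finset V} (hS : S.Nonempty) [Nonempty V]
    (hwv : ∀ v : V, 0 < H.wv v) :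
    H.disc (H.indf S) = (∑ e ∈ H.bdry S, H.w e) / (H.wS S * (1 - H.wS S / H.wS univ)) := by
  unfold disc
  rw [H.indf_denom S hwv]
  congr 1
  rw [show ∑ e ∈ H.E, H.w e * H.edgeDisc (H.indf S) e
      = ∑ e ∈ H.E, (if e ∈ H.bdry S then H.w e else 0) from
    Finset.sum_congr rfl fun e he => by rw [H.indf_edgeDisc he]; split_ifs <;> ring]
  rw [Finset.sum_ite_mem, bdry, Finset.inter_filter, Finset.inter_self]

lemma gamma2_le_indf {S : Finset V} (hS : S.Nonempty) (hSu : S ≠ univ)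
    (hwv : ∀ v : V, 0 < H.wv v) :
    H.gamma2 ≤ (∑ e ∈ H.bdry S, H.w e) / (H.wS S * (1 - H.wS S / H.wS univ)) := by
  have : Nonempty V := ⟨hS.choose⟩
  have hW : 0 < H.wS univ := H.wS_univ_pos hwv
  rw [← H.indf_disc hS hwv]
  apply csInf_le (H.gamma2_bddBelow hwv)
  exact ⟨H.indf S, H.indf_ne_zero hS hSu hwv, H.indf_wip S hW.ne', rfl⟩

/-- Cheeger easy direction, for sets of weight at most half. -/
lemma cheeger {S : Finset V} (hS : S.Nonempty) (hSu : S ≠ univ)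
    (hwv : ∀ v : V, 0 < H.wv v) (hhalf : H.wS S ≤ H.wS univ / 2)
    (hg : 0 ≤ H.gamma2) :
    H.gamma2 * H.wS S ≤ 2 * ∑ e ∈ H.bdry S, H.w e := by
  have : Nonempty V := ⟨hS.choose⟩
  have hW : 0 < H.wS univ := H.wS_univ_pos hwv
  have hs : 0 < H.wS S := H.wS_pos hwv hS
  have hα : H.wS S / H.wS univ ≤ 1 / 2 := by
    rw [div_le_div_iff₀ hW (by norm_num)]; linarith
  have h1α : (1:ℝ)/2 ≤ 1 - H.wS S / H.wS univ := by linarith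
  have hden : 0 < H.wS S * (1 - H.wS S / H.wS univ) := by nlinarith
  have := H.gamma2_le_indf hS hSu hwv
  rw [le_div_iff₀ hden] at this
  have hbn : 0 ≤ ∑ e ∈ H.bdry S, H.w e :=
    Finset.sum_nonneg fun e he => le_of_lt (H.w_pos e (Finset.mem_filter.mp he).1)
  nlinarith

/-- `γ₂ ≤ 2`. -/
lemma gamma2_le_two (hcard : 2 ≤ Fintype.card V) (hwv : ∀ v : V, 0 < H.wv v) :
    H.gamma2 ≤ 2 := by
  have : Nonempty V := Fintype.card_pos_iff.mp (by omega)
  obtain ⟨u0, -, hu0⟩ := Finset.exists_min_image univ (fun v => H.wv v) univ_nonempty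
  set S : Finset V := {u0} with hSdef
  have hS : S.Nonempty := Finset.singleton_nonempty u0
  have hSu : S ≠ univ := by
    intro h
    have : Fintype.card V = 1 := by rw [← Finset.card_univ, ← h, hSdef, Finset.card_singleton]
    omega
  have hW : 0 < H.wS univ := H.wS_univ_pos hwv
  have hs : H.wS S = H.wv u0 := by rw [hSdef, wS, Finset.sum_singleton]
  have hs_pos : 0 < H.wS S := H.wS_pos hwv hS
  have hhalf : H.wS S ≤ H.wS univ / 2 := by
    have h2 : 2 * H.wv u0 ≤ H.wS univ := by
      obtain ⟨v1, hv1⟩ : ∃ v1 : V, v1 ≠ u0 := by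
        have := Fintype.exists_ne_of_one_lt_card (by omega) u0
        exact this
      have : H.wv u0 + H.wv v1 ≤ H.wS univ := by
        rw [wS]
        have : ({u0, v1} : Finset V) ⊆ univ := Finset.subset_univ _
        calc H.wv u0 + H.wv v1 = ∑ v ∈ ({u0, v1} : Finset V), H.wv v := by
              rw [Finset.sum_pair (Ne.symm hv1)]
          _ ≤ _ := Finset.sum_le_sum_of_subset_of_nonneg this (fun v _ _ => H.wv_nonneg v)
      have := hu0 v1 (Finset.mem_univ v1)
      linarith
    rw [hs]; linarith
  have hα : H.wS S / H.wS univ ≤ 1 / 2 := by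
    rw [div_le_div_iff₀ hW (by norm_num)]; linarith
  have h1α : (1:ℝ)/2 ≤ 1 - H.wS S / H.wS univ := by linarith
  have hbd : ∑ e ∈ H.bdry S, H.w e ≤ H.wS S := by
    apply H.sum_le_wS _ (Finset.filter_subset _ _)
    intro e he
    exact (Finset.mem_filter.mp he).2.1
  refine (H.gamma2_le_indf hS hSu hwv).trans ?_
  rw [div_le_iff₀ (by nlinarith)]
  nlinarith

-- ===== path lemmas =====


lemma connectsIn_self {u : V} {e : Finset V} (he : e ∈ H.E) (hu : u ∈ e) :
    H.connectsIn u u 1 := by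
  refine ⟨[e], rfl, by simpa using he, List.isChain_singleton e, by simp, ?_, ?_⟩ <;> simpa

lemma connectsIn_symm {u v : V} {l : ℕ} (h : H.connectsIn u v l) : H.connectsIn v u l := by
  obtain ⟨p, hlen, hE, hchain, hp, hu, hv⟩ := h
  have hrev : p.reverse ≠ [] := by simpa using hp
  refine ⟨p.reverse, by simpa using hlen, fun e he => hE e (List.mem_reverse.mp he), ?_, hrev, ?_, ?_⟩
  · unfold List.Chain' at hchain ⊢
    rw [List.isChain_reverse]
    exact hchain.imp fun a b hab => by rwa [Finset.inter_comm] at hab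
  · rwa [List.head_reverse]
  · rwa [List.getLast_reverse]

lemma connectsIn_trans {u x v : V} {l₁ l₂ : ℕ} (h₁ : H.connectsIn u x l₁)
    (h₂ : H.connectsIn x v l₂) : H.connectsIn u v (l₁ + l₂) := by
  obtain ⟨p, hlenp, hEp, hchainp, hp, hup, hxp⟩ := h₁
  obtain ⟨q, hlenq, hEq, hchainq, hq, hxq, hvq⟩ := h₂
  have hne : p ++ q ≠ [] := by simp [hp]
  refine ⟨p ++ q, by simp [hlenp, hlenq], ?_, ?_, hne, ?_, ?_⟩
  · intro e he; rcases List.mem_append.mp he with h | h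
    exacts [hEp e h, hEq e h]
  · unfold List.Chain'
    rw [List.isChain_append]
    refine ⟨hchainp, hchainq, ?_⟩
    intro a ha b hb
    rw [List.getLast?_eq_getLast_of_ne_nil hp, Option.mem_def, Option.some.injEq] at ha
    rw [List.head?_eq_head hq, Option.mem_def, Option.some.injEq] at hb
    subst ha; subst hb
    exact ⟨x, Finset.mem_inter.mpr ⟨hxp, hxq⟩⟩
  · rwa [List.head_append_of_ne_nil hp]
  · rwa [List.getLast_append_of_ne_nil _ hq]

-- ===== balls =====

open Classical in
/-- the hop-ball of radius `t` around `u`. -/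
noncomputable def ball (H : EdgeWeightedHypergraph V) (u : V) (t : ℕ) : Finset V :=
  univ.filter (fun v => ∃ l, l ≤ t ∧ l ≠ 0 ∧ H.connectsIn u v l)

lemma mem_ball {u v : V} {t : ℕ} :
    v ∈ H.ball u t ↔ ∃ l, l ≤ t ∧ l ≠ 0 ∧ H.connectsIn u v l := by
  classical
  simp [ball]

lemma self_mem_ball {u : V} {t : ℕ} (ht : 1 ≤ t) (hwv : 0 < H.wv u) :
    u ∈ H.ball u t := by
  obtain ⟨e, he, hue⟩ := H.exists_edge hwv
  exact H.mem_ball.mpr ⟨1, ht, one_ne_zero, H.connectsIn_self he hue⟩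

lemma ball_mono {u : V} {s t : ℕ} (h : s ≤ t) : H.ball u s ⊆ H.ball u t := by
  intro v hv
  obtain ⟨l, hl, hl0, hc⟩ := H.mem_ball.mp hv
  exact H.mem_ball.mpr ⟨l, hl.trans h, hl0, hc⟩

lemma ball_expand {u v : V} {t : ℕ} {e : Finset V} (he : e ∈ H.E)
    (hint : (e ∩ H.ball u t).Nonempty) (hv : v ∈ e) : v ∈ H.ball u (t + 1) := by
  obtain ⟨x, hx⟩ := hint
  rw [Finset.mem_inter] at hx
  obtain ⟨l, hl, hl0, p, hlen, hE, hchain, hp, hup, hxp⟩ := H.mem_ball.mp hx.2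
  refine H.mem_ball.mpr ⟨l + 1, by omega, by omega, p ++ [e], ?_, ?_, ?_, by simp, ?_, ?_⟩
  · simp [hlen]
  · intro f hf; rcases List.mem_append.mp hf with h | h
    exacts [hE f h, by rw [List.mem_singleton] at h; rwa [h]]
  · unfold List.Chain'
    rw [List.isChain_append]
    refine ⟨hchain, List.isChain_singleton e, ?_⟩
    intro a ha b hb
    rw [List.getLast?_eq_getLast_of_ne_nil hp, Option.mem_def, Option.some.injEq] at ha
    simp only [List.head?_cons, Option.mem_def, Option.some.injEq] at hb
    subst ha; subst hb
    exact ⟨x, Finset.mem_inter.mpr ⟨hxp, hx.1⟩⟩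
  · rwa [List.head_append_of_ne_nil hp]
  · rw [List.getLast_append_of_ne_nil _ (by simp)]
    simpa using hv
lemma ball_growth (hwv : ∀ v : V, 0 < H.wv v) (hg : 0 ≤ H.gamma2) {u : V} {t : ℕ}
    (ht : 1 ≤ t) (hhalf : H.wS (H.ball u t) ≤ H.wS univ / 2) :
    (1 + H.gamma2 / 2) * H.wS (H.ball u t) ≤ H.wS (H.ball u (t + 1)) := by
  have : Nonempty V := ⟨u⟩
  have hW : 0 < H.wS univ := H.wS_univ_pos hwv
  set B := H.ball u t with hB
  have hBne : B.Nonempty := ⟨u, H.self_mem_ball ht (hwv u)⟩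
  have hBu : B ≠ univ := by
    intro h; rw [h] at hhalf; linarith
  have hch := H.cheeger hBne hBu hwv hhalf hg
  set D := H.ball u (t + 1) \ B with hD
  have hbd : ∑ e ∈ H.bdry B, H.w e ≤ H.wS D := by
    apply H.sum_le_wS _ (Finset.filter_subset _ _)
    intro e he
    simp only [bdry, Finset.mem_filter] at he
    obtain ⟨heE, hint, ⟨v, hv⟩⟩ := he
    rw [Finset.mem_sdiff] at hv
    refine ⟨v, Finset.mem_inter.mpr ⟨hv.1, ?_⟩⟩
    rw [hD, Finset.mem_sdiff]
    exact ⟨H.ball_expand heE hint hv.1, hv.2⟩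
  have hsplit : H.wS (H.ball u (t + 1)) = H.wS B + H.wS D := by
    have hsub : B ⊆ H.ball u (t + 1) := H.ball_mono (by omega)
    rw [wS, wS, wS, hD, ← Finset.sum_sdiff hsub]
    ring
  have hBnn : 0 ≤ H.wS B := H.wS_nonneg B
  linarith

lemma ball_pow_le (hwv : ∀ v : V, 0 < H.wv v) (hg : 0 ≤ H.gamma2) (u : V) (k : ℕ)
    (hk : ∀ s ≤ k, H.wS (H.ball u (s + 1)) ≤ H.wS univ / 2) :
    (1 + H.gamma2 / 2) ^ k * H.wv u ≤ H.wS (H.ball u (k + 1)) := by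
  induction k with
  | zero =>
    simp only [pow_zero, one_mul]
    exact Finset.single_le_sum (f := fun v => H.wv v) (fun v _ => H.wv_nonneg v)
      (H.self_mem_ball le_rfl (hwv u))
  | succ k ih =>
    have ih' := ih (fun s hs => hk s (by omega))
    have hgrow := H.ball_growth hwv hg (t := k + 1) (by omega) (hk k (by omega))
    have h1 : (0:ℝ) ≤ 1 + H.gamma2 / 2 := by linarith
    calc (1 + H.gamma2 / 2) ^ (k+1) * H.wv u
        = (1 + H.gamma2 / 2) * ((1 + H.gamma2 / 2) ^ k * H.wv u) := by ring
      _ ≤ (1 + H.gamma2 / 2) * H.wS (H.ball u (k + 1)) := by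
          exact mul_le_mul_of_nonneg_left ih' h1
      _ ≤ _ := hgrow
lemma two_wv_le (hcard : 2 ≤ Fintype.card V) (hwv : ∀ v : V, 0 < H.wv v) :
    ∃ u0 : V, 2 * H.wv u0 ≤ H.wS univ := by
  have : Nonempty V := Fintype.card_pos_iff.mp (by omega)
  obtain ⟨u0, -, hu0⟩ := Finset.exists_min_image univ (fun v => H.wv v) univ_nonempty
  obtain ⟨v1, hv1⟩ := Fintype.exists_ne_of_one_lt_card (by omega) u0
  refine ⟨u0, ?_⟩
  have h := Finset.sum_le_sum_of_subset_of_nonneg (Finset.subset_univ ({u0, v1} : Finset V))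
    (fun v _ _ => H.wv_nonneg v)
  rw [Finset.sum_pair (Ne.symm hv1)] at h
  have := hu0 v1 (Finset.mem_univ v1)
  unfold wS
  linarith

lemma ball_half (hwv : ∀ v : V, 0 < H.wv v) (hg : 0 < H.gamma2) (u : V) {N : ℝ}
    (hNu : ∀ v : V, H.wS univ / H.wv v ≤ N) (hN2 : 2 ≤ N) {m : ℕ}
    (hm : Real.log N / Real.log (1 + H.gamma2 / 2) < (m : ℝ)) :
    H.wS univ / 2 < H.wS (H.ball u (m + 1)) := by
  have : Nonempty V := ⟨u⟩
  have hW : 0 < H.wS univ := H.wS_univ_pos hwv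
  have hNpos : (0:ℝ) < N := by linarith
  have hvN : ∀ v : V, H.wS univ / N ≤ H.wv v := by
    intro v
    rw [div_le_iff₀ hNpos]
    have h1 := (div_le_iff₀ (hwv v)).mp (hNu v)
    nlinarith
  by_contra hcon
  push_neg at hcon
  have hmono : ∀ s ≤ m, H.wS (H.ball u (s + 1)) ≤ H.wS univ / 2 := fun s hs =>
    (H.wS_mono (H.ball_mono (by omega))).trans hcon
  have hpow := H.ball_pow_le hwv hg.le u m hmono
  have hlog1 : 0 < Real.log (1 + H.gamma2 / 2) := Real.log_pos (by linarith)
  set p := (1 + H.gamma2 / 2) ^ m with hp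
  have hppos : 0 < p := pow_pos (by linarith) m
  have h1 : p * (H.wS univ / N) ≤ H.wS univ / 2 :=
    le_trans (mul_le_mul_of_nonneg_left (hvN u) hppos.le) (hpow.trans hcon)
  have h2 : p ≤ N := by
    have hmul : p * (H.wS univ / N) * N ≤ (H.wS univ / 2) * N :=
      mul_le_mul_of_nonneg_right h1 hNpos.le
    rw [mul_assoc, div_mul_cancel₀ _ hNpos.ne'] at hmul
    have h3 : p * H.wS univ ≤ N * H.wS univ := by
      nlinarith [hmul, mul_nonneg hW.le hNpos.le]
    exact le_of_mul_le_mul_right h3 hW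
  have h3 : Real.log p ≤ Real.log N := Real.log_le_log hppos h2
  rw [hp, Real.log_pow] at h3
  have h4 : Real.log N < (m : ℝ) * Real.log (1 + H.gamma2 / 2) :=
    (div_lt_iff₀ hlog1).mp hm
  linarith


end EdgeWeightedHypergraph

/-- There is a universal constant `C > 0` such that every hypergraph with at least two
vertices and `γ₂ > 0` has hop-diameter at most `C · ln(N_w) / γ₂`,
where `N_w = max_u w(V)/w_u`. -/
theorem hypergraph_diameter_bound :
    ∃ C : ℝ, 0 < C ∧
      ∀ (V : Type) [Fintype V] [DecidableEq V] (H : EdgeWeightedHypergraph V),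
        2 ≤ Fintype.card V → (∀ v : V, 0 < H.wv v) → 0 < H.gamma2 →
        (H.hopDiam : ℝ) ≤
          C * Real.log (sSup {x : ℝ | ∃ u : V, x = H.wS Finset.univ / H.wv u}) /
            H.gamma2 := by
  refine ⟨100, by norm_num, ?_⟩
  intro V _ _ H hcard hwv hg
  have hne : Nonempty V := Fintype.card_pos_iff.mp (by omega)
  set γ := H.gamma2 with hγ
  set N := sSup {x : ℝ | ∃ u : V, x = H.wS Finset.univ / H.wv u} with hN
  have hW : 0 < H.wS Finset.univ := H.wS_univ_pos hwv
  -- facts about N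
  have hNset : {x : ℝ | ∃ u : V, x = H.wS Finset.univ / H.wv u}
      = Set.range (fun u : V => H.wS Finset.univ / H.wv u) := by
    ext x; simp [eq_comm]
  have hbdd : BddAbove {x : ℝ | ∃ u : V, x = H.wS Finset.univ / H.wv u} := by
    rw [hNset]; exact (Set.finite_range _).bddAbove
  have hNu : ∀ v : V, H.wS Finset.univ / H.wv v ≤ N := fun v => le_csSup hbdd ⟨v, rfl⟩
  have hN2 : (2:ℝ) ≤ N := by
    obtain ⟨u0, hu0⟩ := H.two_wv_le hcard hwv
    refine le_trans ?_ (hNu u0)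
    rw [le_div_iff₀ (hwv u0)]
    linarith
  have hγ2 : γ ≤ 2 := H.gamma2_le_two hcard hwv
  have hlog1 : 0 < Real.log (1 + γ / 2) := Real.log_pos (by linarith)
  have hlogN : Real.log 2 ≤ Real.log N := Real.log_le_log (by norm_num) hN2
  have hlog2 : (0.6931:ℝ) ≤ Real.log 2 := by
    have := Real.log_two_gt_d9; linarith
  have hlogNpos : 0 < Real.log N := by linarith
  set m := Nat.floor (Real.log N / Real.log (1 + γ / 2)) + 1 with hm
  have hmlt : Real.log N / Real.log (1 + γ / 2) < (m : ℝ) := by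
    rw [hm]; push_cast; exact Nat.lt_floor_add_one _
  have hhalf : ∀ u : V, H.wS Finset.univ / 2 < H.wS (H.ball u (m + 1)) := fun u =>
    H.ball_half hwv hg u hNu hN2 hmlt
  -- diameter bound
  have hdiam : H.hopDiam ≤ 2 * (m + 1) := by
    apply Nat.sInf_le
    intro u v
    have hint : (H.ball u (m+1) ∩ H.ball v (m+1)).Nonempty := by
      by_contra hd
      rw [Finset.not_nonempty_iff_eq_empty] at hd
      have hdisj : Disjoint (H.ball u (m+1)) (H.ball v (m+1)) :=
        Finset.disjoint_iff_inter_eq_empty.mpr hd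
      have hsum : H.wS (H.ball u (m+1)) + H.wS (H.ball v (m+1)) ≤ H.wS Finset.univ := by
        have h := H.wS_mono (Finset.subset_univ (H.ball u (m+1) ∪ H.ball v (m+1)))
        have h2 : H.wS (H.ball u (m+1) ∪ H.ball v (m+1))
            = H.wS (H.ball u (m+1)) + H.wS (H.ball v (m+1)) := Finset.sum_union hdisj
        linarith
      linarith [hhalf u, hhalf v]
    obtain ⟨x, hx⟩ := hint
    rw [Finset.mem_inter] at hx
    obtain ⟨l₁, hl₁, -, hc₁⟩ := H.mem_ball.mp hx.1
    obtain ⟨l₂, hl₂, -, hc₂⟩ := H.mem_ball.mp hx.2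
    exact ⟨l₁ + l₂, by omega, H.connectsIn_trans hc₁ (H.connectsIn_symm hc₂)⟩
  -- arithmetic
  have hlogq : γ / 4 ≤ Real.log (1 + γ / 2) := by
    have hd : (0:ℝ) < 1 + γ / 2 := by linarith
    have h := Real.log_le_sub_one_of_pos (x := 1 / (1 + γ / 2)) (by positivity)
    rw [one_div, Real.log_inv] at h
    have hy : (1 / (1 + γ / 2)) * (1 + γ / 2) = 1 := div_mul_cancel₀ 1 hd.ne'
    have h2 : γ / 4 ≤ 1 - 1 / (1 + γ / 2) := by nlinarith [hy]
    rw [one_div] at h2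
    linarith
  have hmR : (m : ℝ) ≤ Real.log N / Real.log (1 + γ / 2) + 1 := by
    rw [hm]; push_cast
    have := Nat.floor_le (a := Real.log N / Real.log (1 + γ / 2))
      (by positivity)
    linarith
  have hL : Real.log N / Real.log (1 + γ / 2) ≤ 4 * Real.log N / γ := by
    rw [div_le_div_iff₀ hlog1 hg]
    nlinarith [hlogq, hlogNpos.le]
  have hfinal : (H.hopDiam : ℝ) ≤ 8 * Real.log N / γ + 4 := by
    have hcast : (H.hopDiam : ℝ) ≤ 2 * ((m : ℝ) + 1) := by exact_mod_cast hdiam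
    calc (H.hopDiam : ℝ) ≤ 2 * ((m : ℝ) + 1) := hcast
      _ ≤ 2 * (Real.log N / Real.log (1 + γ / 2) + 2) := by linarith
      _ ≤ 2 * (4 * Real.log N / γ + 2) := by linarith
      _ = 8 * Real.log N / γ + 4 := by ring
  refine hfinal.trans ?_
  have h4 : (4:ℝ) ≤ 92 * Real.log N / γ := by
    rw [le_div_iff₀ hg]
    nlinarith
  have : 8 * Real.log N / γ + 92 * Real.log N / γ = 100 * Real.log N / γ := by ring
  linarith
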